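/- Let M be a matching of the complete graph on [k] and for each edge e = {j,j'} ∈ M let p^e be a PMF on {0,1}^n × {j,j'} with each class having mass 1/2, and for each unmatched class c let p^c be a PMF on {0,1}^n × {c}. Define p̃(v,j) = (2/k) p^e(v,j) if j belongs to edge e ∈ M, and p̃(v,j) = (1/k) p^j(v,j) if j is unmatched. Then p̃ is a balanced PMF on {0,1}^n × [k], and 1 - Σ_v max_j p̃(v,j) ≥ (2/k) Σ_{{j,j'}∈M} Σ_v min(p^e(v,j), p^e(v,j')). -/

import Mathlib

open Finset

/-- given a matching `M` on the `k` classes, per-edge balanced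
PMFs `pe e` on `{0,1}^n × {e.1, e.2}` (two classes indexed by `Fin 2`, each of
mass `1/2`) and per-unmatched-class PMFs `pc c`, the mixture
`p̃(v,j) = (2/k) pe(v,·)` on matched classes and `(1/k) pc(v)` on unmatched
classes is a balanced PMF on `{0,1}^n × [k]`, and its Bayes error is at least
`(2/k) ∑_{e∈M} ∑_v min(pe(v,e.1), pe(v,e.2))`. -/
theorem stmt19 (n k : ℕ) [NeZero k]
    (M : Finset (Fin k × Fin k))
    (hM1 : ∀ e ∈ M, e.1 ≠ e.2)
    (hM2 : ∀ e ∈ M, ∀ e' ∈ M, e ≠ e' →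
      e.1 ≠ e'.1 ∧ e.1 ≠ e'.2 ∧ e.2 ≠ e'.1 ∧ e.2 ≠ e'.2)
    (pe : Fin k × Fin k → (Fin n → Bool) → Fin 2 → ℝ)
    (hpe0 : ∀ e ∈ M, ∀ v c, 0 ≤ pe e v c)
    (hpe1 : ∀ e ∈ M, ∀ c : Fin 2, ∑ v : Fin n → Bool, pe e v c = 1 / 2)
    (pc : Fin k → (Fin n → Bool) → ℝ)
    (hpc0 : ∀ c : Fin k, (∀ e ∈ M, c ≠ e.1 ∧ c ≠ e.2) → ∀ v, 0 ≤ pc c v)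
    (hpc1 : ∀ c : Fin k, (∀ e ∈ M, c ≠ e.1 ∧ c ≠ e.2) →
      ∑ v : Fin n → Bool, pc c v = 1)
    (ptilde : (Fin n → Bool) → Fin k → ℝ)
    (hmatched : ∀ e ∈ M, ∀ v,
      ptilde v e.1 = (2 / (k : ℝ)) * pe e v 0 ∧
      ptilde v e.2 = (2 / (k : ℝ)) * pe e v 1)
    (hunmatched : ∀ c : Fin k, (∀ e ∈ M, c ≠ e.1 ∧ c ≠ e.2) →
      ∀ v, ptilde v c = (1 / (k : ℝ)) * pc c v) :
    (∀ v j, 0 ≤ ptilde v j) ∧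
    (∀ j : Fin k, ∑ v : Fin n → Bool, ptilde v j = 1 / (k : ℝ)) ∧
    (2 / (k : ℝ)) * ∑ e ∈ M, ∑ v : Fin n → Bool, min (pe e v 0) (pe e v 1)
      ≤ 1 - ∑ v : Fin n → Bool,
          (Finset.univ.sup' Finset.univ_nonempty (fun j : Fin k => ptilde v j)) := by

  classical
  have hk : (0:ℝ) < k := Nat.cast_pos.mpr (Nat.pos_of_ne_zero (NeZero.ne k))
  have h0 : ∀ v j, 0 ≤ ptilde v j := by
    intro v j
    by_cases h : ∃ e ∈ M, j = e.1 ∨ j = e.2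
    · obtain ⟨e, he, hj | hj⟩ := h
      · rw [hj, (hmatched e he v).1]
        exact mul_nonneg (by positivity) (hpe0 e he v 0)
      · rw [hj, (hmatched e he v).2]
        exact mul_nonneg (by positivity) (hpe0 e he v 1)
    · push_neg at h
      have hun : ∀ e ∈ M, j ≠ e.1 ∧ j ≠ e.2 := fun e he => (h e he)
      rw [hunmatched j hun v]
      exact mul_nonneg (by positivity) (hpc0 j hun v)
  have h1 : ∀ j : Fin k, ∑ v : Fin n → Bool, ptilde v j = 1 / (k:ℝ) := by
    intro j
    by_cases h : ∃ e ∈ M, j = e.1 ∨ j = e.2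
    · obtain ⟨e, he, hj | hj⟩ := h
      · calc ∑ v : Fin n → Bool, ptilde v j
            = ∑ v : Fin n → Bool, (2/(k:ℝ)) * pe e v 0 :=
              Finset.sum_congr rfl (fun v _ => by rw [hj, (hmatched e he v).1])
          _ = (2/(k:ℝ)) * ∑ v : Fin n → Bool, pe e v 0 := (Finset.mul_sum _ _ _).symm
          _ = 1 / (k:ℝ) := by rw [hpe1 e he 0]; field_simp
      · calc ∑ v : Fin n → Bool, ptilde v j
            = ∑ v : Fin n → Bool, (2/(k:ℝ)) * pe e v 1 :=
              Finset.sum_congr rfl (fun v _ => by rw [hj, (hmatched e he v).2])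
          _ = (2/(k:ℝ)) * ∑ v : Fin n → Bool, pe e v 1 := (Finset.mul_sum _ _ _).symm
          _ = 1 / (k:ℝ) := by rw [hpe1 e he 1]; field_simp
    · push_neg at h
      have hun : ∀ e ∈ M, j ≠ e.1 ∧ j ≠ e.2 := fun e he => (h e he)
      calc ∑ v : Fin n → Bool, ptilde v j
          = ∑ v : Fin n → Bool, (1/(k:ℝ)) * pc j v :=
            Finset.sum_congr rfl (fun v _ => hunmatched j hun v)
        _ = (1/(k:ℝ)) * ∑ v : Fin n → Bool, pc j v := (Finset.mul_sum _ _ _).symm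
        _ = 1 / (k:ℝ) := by rw [hpc1 j hun]; ring
  refine ⟨h0, h1, ?_⟩
  have hsum1 : ∑ v : Fin n → Bool, ∑ j : Fin k, ptilde v j = 1 := by
    rw [Finset.sum_comm]
    simp only [h1]
    rw [Finset.sum_const, Finset.card_univ, Fintype.card_fin]
    rw [nsmul_eq_mul]
    field_simp
  have key : ∀ v : Fin n → Bool,
      ∑ e ∈ M, min (ptilde v e.1) (ptilde v e.2)
        ≤ ∑ j : Fin k, ptilde v j
          - Finset.univ.sup' Finset.univ_nonempty (fun j : Fin k => ptilde v j) := by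
    intro v
    obtain ⟨j0, _, hj0⟩ := Finset.exists_mem_eq_sup' Finset.univ_nonempty
      (fun j : Fin k => ptilde v j)
    rw [hj0]
    set f : Fin k × Fin k → Fin k := fun e => if e.1 = j0 then e.2 else e.1 with hf
    have hstep : ∑ e ∈ M, min (ptilde v e.1) (ptilde v e.2) ≤ ∑ e ∈ M, ptilde v (f e) := by
      apply Finset.sum_le_sum
      intro e he
      by_cases h : e.1 = j0 <;> simp [hf, h, min_le_left, min_le_right]
    have hinj : ∀ e ∈ M, ∀ e' ∈ M, f e = f e' → e = e' := by
      intro e he e' he' hfe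
      by_contra hne
      obtain ⟨h1, h2, h3, h4⟩ := hM2 e he e' he' hne
      simp only [hf] at hfe
      split_ifs at hfe
      · exact h4 hfe
      · exact h3 hfe
      · exact h2 hfe
      · exact h1 hfe
    have hne : ∀ e ∈ M, f e ≠ j0 := by
      intro e he
      simp only [hf]
      split_ifs with h
      · intro h2; exact hM1 e he (h.trans h2.symm)
      · exact h
    have hsub : M.image f ⊆ Finset.univ.erase j0 := by
      intro x hx
      obtain ⟨e, he, rfl⟩ := Finset.mem_image.mp hx
      exact Finset.mem_erase.mpr ⟨hne e he, Finset.mem_univ _⟩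
    calc ∑ e ∈ M, min (ptilde v e.1) (ptilde v e.2)
        ≤ ∑ e ∈ M, ptilde v (f e) := hstep
      _ = ∑ x ∈ M.image f, ptilde v x := (Finset.sum_image hinj).symm
      _ ≤ ∑ x ∈ Finset.univ.erase j0, ptilde v x :=
          Finset.sum_le_sum_of_subset_of_nonneg hsub (fun x _ _ => h0 v x)
      _ = ∑ j : Fin k, ptilde v j - ptilde v j0 :=
          Finset.sum_erase_eq_sub (Finset.mem_univ j0)
  have hLHS : (2 / (k:ℝ)) * ∑ e ∈ M, ∑ v : Fin n → Bool, min (pe e v 0) (pe e v 1)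
      = ∑ v : Fin n → Bool, ∑ e ∈ M, min (ptilde v e.1) (ptilde v e.2) := by
    rw [Finset.mul_sum, ← Finset.sum_comm]
    apply Finset.sum_congr rfl
    intro e he
    rw [Finset.mul_sum]
    apply Finset.sum_congr rfl
    intro v _
    rw [(hmatched e he v).1, (hmatched e he v).2]
    exact mul_min_of_nonneg _ _ (by positivity)
  rw [hLHS]
  calc ∑ v : Fin n → Bool, ∑ e ∈ M, min (ptilde v e.1) (ptilde v e.2)
      ≤ ∑ v : Fin n → Bool, (∑ j : Fin k, ptilde v j
          - Finset.univ.sup' Finset.univ_nonempty (fun j : Fin k => ptilde v j)) :=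
        Finset.sum_le_sum (fun v _ => key v)
    _ = 1 - ∑ v : Fin n → Bool,
          Finset.univ.sup' Finset.univ_nonempty (fun j : Fin k => ptilde v j) := by
        rw [Finset.sum_sub_distrib, hsum1]
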